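/- Let x₁,…,x_T ≥ 0 and ε > 0, and define φ_ε(x) = x²/(x+ε). Then (1/T)Σ_{t=1}^T x_t ≤ (1/T)Σ_{t=1}^T φ_ε(x_t) + √(ε)·√((1/T)Σ_{t=1}^T φ_ε(x_t)). -/

import Mathlib

theorem stmt17 {T : ℕ} (hT : 0 < T) (x : ℕ → ℝ) (ε : ℝ) (hε : 0 < ε)
    (hx : ∀ t ∈ Finset.Icc 1 T, 0 ≤ x t) :
    (1 / (T : ℝ)) * ∑ t ∈ Finset.Icc 1 T, x t
      ≤ (1 / (T : ℝ)) * ∑ t ∈ Finset.Icc 1 T, (x t) ^ 2 / (x t + ε)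
        + Real.sqrt ε *
          Real.sqrt ((1 / (T : ℝ)) * ∑ t ∈ Finset.Icc 1 T, (x t) ^ 2 / (x t + ε)) := by
  set φ : ℕ → ℝ := fun t => (x t) ^ 2 / (x t + ε) with hφ
  have hTpos : (0 : ℝ) < T := by exact_mod_cast hT
  have hφnn : ∀ t ∈ Finset.Icc 1 T, 0 ≤ φ t := by
    intro t ht
    exact div_nonneg (sq_nonneg _) (by linarith [hx t ht])
  have hSnn : 0 ≤ ∑ t ∈ Finset.Icc 1 T, φ t := Finset.sum_nonneg hφnn
  -- pointwise bound
  have hpt : ∀ t ∈ Finset.Icc 1 T, x t ≤ φ t + Real.sqrt ε * Real.sqrt (φ t) := by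
    intro t ht
    have hxt := hx t ht
    have hden : 0 < x t + ε := by linarith
    have h1 : x t - φ t = x t * ε / (x t + ε) := by
      simp only [hφ]; rw [eq_div_iff hden.ne', sub_mul, div_mul_cancel₀ _ hden.ne']; ring
    have h2 : Real.sqrt ε * Real.sqrt (φ t) = Real.sqrt (ε * φ t) := by
      rw [Real.sqrt_mul hε.le]
    have h3 : (x t * ε / (x t + ε)) ^ 2 ≤ ε * φ t := by
      simp only [hφ]
      rw [div_pow, div_le_iff₀ (by positivity : (0:ℝ) < (x t + ε) ^ 2)]
      have e1 : ε * ((x t) ^ 2 / (x t + ε)) * (x t + ε) ^ 2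
          = ε * (x t) ^ 2 * (x t + ε) := by
        field_simp
      rw [e1]
      have e2 : (x t * ε) ^ 2 = ε * (x t) ^ 2 * ε := by ring
      rw [e2]
      have := mul_le_mul_of_nonneg_left (show ε ≤ x t + ε by linarith)
        (mul_nonneg hε.le (sq_nonneg (x t)))
      linarith
    have h4 : x t * ε / (x t + ε) ≤ Real.sqrt (ε * φ t) := by
      have h5 := Real.sqrt_le_sqrt h3
      rwa [Real.sqrt_sq (by positivity)] at h5
    rw [h2]
    have := h1 ▸ h4
    linarith
  have hsum : ∑ t ∈ Finset.Icc 1 T, x t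
      ≤ ∑ t ∈ Finset.Icc 1 T, φ t
        + Real.sqrt ε * ∑ t ∈ Finset.Icc 1 T, Real.sqrt (φ t) := by
    calc ∑ t ∈ Finset.Icc 1 T, x t
        ≤ ∑ t ∈ Finset.Icc 1 T, (φ t + Real.sqrt ε * Real.sqrt (φ t)) :=
          Finset.sum_le_sum hpt
      _ = _ := by rw [Finset.sum_add_distrib, Finset.mul_sum]
  -- Cauchy–Schwarz
  have hCS : ∑ t ∈ Finset.Icc 1 T, Real.sqrt (φ t)
      ≤ Real.sqrt T * Real.sqrt (∑ t ∈ Finset.Icc 1 T, φ t) := by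
    have h := Finset.sum_mul_sq_le_sq_mul_sq (Finset.Icc 1 T)
      (fun _ => (1 : ℝ)) (fun t => Real.sqrt (φ t))
    simp only [one_mul, one_pow, Finset.sum_const, nsmul_eq_mul, mul_one] at h
    have hcard : (Finset.Icc 1 T).card = T := by simp
    rw [hcard] at h
    have h2 : ∑ t ∈ Finset.Icc 1 T, Real.sqrt (φ t) ^ 2 = ∑ t ∈ Finset.Icc 1 T, φ t := by
      refine Finset.sum_congr rfl fun t ht => Real.sq_sqrt (hφnn t ht)
    rw [h2] at h
    have hnn : 0 ≤ ∑ t ∈ Finset.Icc 1 T, Real.sqrt (φ t) :=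
      Finset.sum_nonneg fun t _ => Real.sqrt_nonneg _
    calc ∑ t ∈ Finset.Icc 1 T, Real.sqrt (φ t)
        = Real.sqrt ((∑ t ∈ Finset.Icc 1 T, Real.sqrt (φ t)) ^ 2) :=
          (Real.sqrt_sq hnn).symm
      _ ≤ Real.sqrt ((T : ℝ) * ∑ t ∈ Finset.Icc 1 T, φ t) := Real.sqrt_le_sqrt h
      _ = _ := Real.sqrt_mul (le_of_lt hTpos) _
  have hfinal : Real.sqrt ((1 / (T : ℝ)) * ∑ t ∈ Finset.Icc 1 T, φ t)
      = Real.sqrt (∑ t ∈ Finset.Icc 1 T, φ t) / Real.sqrt T := by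
    rw [Real.sqrt_mul (by positivity), one_div, Real.sqrt_inv, inv_mul_eq_div]
  rw [hfinal]
  have step : (1 / (T : ℝ)) * ∑ t ∈ Finset.Icc 1 T, x t
      ≤ (1 / (T : ℝ)) * (∑ t ∈ Finset.Icc 1 T, φ t
        + Real.sqrt ε * (Real.sqrt T * Real.sqrt (∑ t ∈ Finset.Icc 1 T, φ t))) := by
    apply mul_le_mul_of_nonneg_left _ (by positivity)
    calc ∑ t ∈ Finset.Icc 1 T, x t
        ≤ ∑ t ∈ Finset.Icc 1 T, φ t
          + Real.sqrt ε * ∑ t ∈ Finset.Icc 1 T, Real.sqrt (φ t) := hsum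
      _ ≤ _ := by
          have := mul_le_mul_of_nonneg_left hCS (Real.sqrt_nonneg ε)
          linarith
  refine step.trans (le_of_eq ?_)
  have hTsq : Real.sqrt T ≠ 0 := by positivity
  have hT2 : (T : ℝ) = Real.sqrt T * Real.sqrt T := (Real.mul_self_sqrt hTpos.le).symm
  obtain ⟨a, ha⟩ : ∃ a, Real.sqrt (T : ℝ) = a := ⟨_, rfl⟩
  rw [ha] at hT2 ⊢
  have ha0 : a ≠ 0 := ha ▸ hTsq
  rw [hT2]
  field_simp
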